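/- Let Φ be a finite, reduced, crystallographic root system spanning a finite-dimensional real inner product space V, with fixed base Δ = {α₁,…,α_n}, fundamental Weyl chamber C = {x ∈ V : ⟨x, α_i∨⟩ > 0 for 1 ≤ i ≤ n}, Weyl group W̊, weight lattice P̊ = {x ∈ V : ⟨x, α∨⟩ ∈ ℤ for all α ∈ Φ}, set of dominant integral weights P̊⁺ = P̊ ∩ C̄, and highest root θ. Let M be the subgroup of (V,+) generated by {w(θ) : w ∈ W̊}, and set M⁺ = M ∩ C̄. Then for every positive integer ℓ and every λ ∈ P̊⁺ there exist μ ∈ M⁺ and w ∈ W̊ such that w(ℓμ − λ) ∈ P̊⁺ and ⟨w(ℓμ − λ), θ∨⟩ ≤ ℓ. -/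

import Mathlib

open RealInnerProductSpace

section AuxLemmas

variable {V : Type*} [NormedAddCommGroup V] [InnerProductSpace ℝ V] [FiniteDimensional ℝ V]

/-- Explicit formula for the reflection in the hyperplane orthogonal to `α`. -/
private lemma aux_reflection_apply (α x : V) :
    Submodule.reflection (ℝ ∙ α)ᗮ x = x - (2 * ⟪x, α⟫ / ⟪α, α⟫) • α := by
  rw [Submodule.reflection_apply, Submodule.starProjection_orthogonal_val, Submodule.starProjection_singleton]
  have h1 : ⟪α, α⟫ = (‖α‖ : ℝ) ^ 2 := real_inner_self_eq_norm_sq α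
  have h2 : ⟪x, α⟫ = ⟪α, x⟫ := real_inner_comm _ _
  have h3 : ((‖α‖ ^ 2 : ℝ) : ℝ) = (‖α‖ : ℝ) ^ 2 := rfl
  rw [h2, h1, h3, two_smul]
  have hc : (2 * ⟪α, x⟫ / (‖α‖ : ℝ) ^ 2) = ⟪α, x⟫ / (‖α‖:ℝ)^2 + ⟪α, x⟫ / (‖α‖:ℝ)^2 := by ring
  rw [hc, add_smul]
  abel

/-- A vector pairing to `1` with each member of a linearly independent family. -/
private lemma aux_exists_dual {n : ℕ} {Δ : Fin n → V} (hΔind : LinearIndependent ℝ Δ) :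
    ∃ d : V, ∀ i, ⟪d, Δ i⟫ = 1 := by
  let U := Submodule.span ℝ (Set.range Δ)
  haveI : CompleteSpace U := FiniteDimensional.complete ℝ U
  let b : Module.Basis (Fin n) ℝ U := Module.Basis.span hΔind
  let f : U →ₗ[ℝ] ℝ := ∑ i, b.coord i
  let fc : U →L[ℝ] ℝ := LinearMap.toContinuousLinearMap f
  let d' : U := (InnerProductSpace.toDual ℝ U).symm fc
  refine ⟨(d' : V), fun i => ?_⟩
  have h1 : ⟪d', b i⟫ = fc (b i) := InnerProductSpace.toDual_symm_apply
  have h2 : ((b i : U) : V) = Δ i := congrArg Subtype.val (Module.Basis.span_apply hΔind i)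
  have h3 : ⟪(d' : V), Δ i⟫ = ⟪d', b i⟫ := by rw [← h2]; rfl
  rw [h3, h1]
  simp [fc, f, LinearMap.sum_apply, Module.Basis.coord_apply, Module.Basis.repr_self, Finsupp.single_apply]

end AuxLemmas

set_option maxHeartbeats 2000000

/-- Euclidean form of Proposition 3.1, case `a₀ = 1`.
Let `Φ` be a finite, reduced, crystallographic root system spanning a finite-dimensional
real inner product space `V`, with base `Δ`, fundamental chamber `C`, Weyl group `W̊`
(generated by the reflections in the root hyperplanes), weight lattice
`P̊ = {x | ⟨x, α∨⟩ ∈ ℤ for all α ∈ Φ}`, dominant weights `P̊⁺ = P̊ ∩ C̄`, and highest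
root `θ`.  Let `M` be the subgroup of `(V, +)` generated by the Weyl orbit of `θ` and
`M⁺ = M ∩ C̄`.  Then for every `ℓ ≥ 1` and every `λ ∈ P̊⁺` there exist `μ ∈ M⁺` and
`w ∈ W̊` such that `w(ℓμ − λ) ∈ P̊⁺` and `⟨w(ℓμ − λ), θ∨⟩ ≤ ℓ`.
Here `⟨x, α∨⟩ = 2⟪x, α⟫/⟪α, α⟫`. -/
theorem exists_translation_weyl_dominant
    {V : Type*} [NormedAddCommGroup V] [InnerProductSpace ℝ V] [FiniteDimensional ℝ V]
    (Φ : Set V) (hΦfin : Φ.Finite) (hΦ0 : (0 : V) ∉ Φ)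
    (hΦspan : Submodule.span ℝ Φ = ⊤)
    (hΦreduced : ∀ α ∈ Φ, ∀ t : ℝ, t • α ∈ Φ → t = 1 ∨ t = -1)
    (hΦrefl : ∀ α ∈ Φ, ∀ β ∈ Φ, β - (2 * ⟪β, α⟫ / ⟪α, α⟫) • α ∈ Φ)
    (hΦcrys : ∀ α ∈ Φ, ∀ β ∈ Φ, ∃ k : ℤ, 2 * ⟪β, α⟫ / ⟪α, α⟫ = (k : ℝ))
    (n : ℕ) (Δ : Fin n → V) (hΔΦ : ∀ i, Δ i ∈ Φ)
    (hΔind : LinearIndependent ℝ Δ)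
    (hΔbase : ∀ β ∈ Φ,
      (∃ c : Fin n → ℤ, (∀ i, 0 ≤ c i) ∧ β = ∑ i, (c i : ℝ) • Δ i) ∨
      (∃ c : Fin n → ℤ, (∀ i, c i ≤ 0) ∧ β = ∑ i, (c i : ℝ) • Δ i))
    -- the fundamental Weyl chamber
    (C : Set V) (hC : C = {x | ∀ i, 0 < 2 * ⟪x, Δ i⟫ / ⟪Δ i, Δ i⟫})
    -- the Weyl group, generated by the reflections in the hyperplanes orthogonal to the roots
    (W : Subgroup (V ≃ₗᵢ[ℝ] V))
    (hW : W = Subgroup.closure {g | ∃ α ∈ Φ, g = Submodule.reflection (ℝ ∙ α)ᗮ})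
    -- the weight lattice
    (P : Set V) (hP : P = {x | ∀ α ∈ Φ, ∃ k : ℤ, 2 * ⟪x, α⟫ / ⟪α, α⟫ = (k : ℝ)})
    -- the highest root
    (θ : V) (hθΦ : θ ∈ Φ)
    (hθhigh : ∀ β ∈ Φ, ∃ c : Fin n → ℝ, (∀ i, 0 ≤ c i) ∧ θ - β = ∑ i, c i • Δ i)
    -- the lattice `M`, generated by the Weyl orbit of `θ`
    (M : AddSubgroup V) (hM : M = AddSubgroup.closure {v | ∃ w ∈ W, v = w θ}) :
    ∀ ℓ : ℕ, 0 < ℓ → ∀ lam ∈ P ∩ closure C,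
      ∃ μ, μ ∈ M ∧ μ ∈ closure C ∧ ∃ w ∈ W,
        w ((ℓ : ℝ) • μ - lam) ∈ P ∩ closure C ∧
        2 * ⟪w ((ℓ : ℝ) • μ - lam), θ⟫ / ⟪θ, θ⟫ ≤ (ℓ : ℝ) := by
  classical
  intro ℓ hℓ lam hlam
  obtain ⟨hlamP, hlamC⟩ := hlam
  have hℓR : (0 : ℝ) < (ℓ : ℝ) := by exact_mod_cast hℓ
  have hroot_ne : ∀ α ∈ Φ, α ≠ (0 : V) := fun α hα h => hΦ0 (h ▸ hα)
  have hroot_pos : ∀ α ∈ Φ, (0 : ℝ) < ⟪α, α⟫ := by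
    intro α hα
    rw [real_inner_self_eq_norm_sq]
    have h1 : 0 < ‖α‖ := norm_pos_iff.mpr (hroot_ne α hα)
    positivity
  have hΔpos : ∀ i, (0 : ℝ) < ⟪Δ i, Δ i⟫ := fun i => hroot_pos _ (hΔΦ i)
  have hθpos : (0 : ℝ) < ⟪θ, θ⟫ := hroot_pos θ hθΦ
  -- W preserves Φ
  have hWΦ : ∀ w ∈ W, ∀ β ∈ Φ, w β ∈ Φ := by
    intro w hw
    rw [hW] at hw
    refine Subgroup.closure_induction (p := fun g _ => ∀ β ∈ Φ, g β ∈ Φ) ?_ ?_ ?_ ?_ hw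
    · rintro x ⟨α, hα, rfl⟩ β hβ
      rw [aux_reflection_apply]; exact hΦrefl α hα β hβ
    · intro β hβ; exact hβ
    · intro x y _ _ hx hy β hβ; exact hx _ (hy β hβ)
    · intro x _ hx β hβ
      have hmaps : Set.MapsTo (⇑x) Φ Φ := fun γ hγ => hx γ hγ
      have hbij : Set.BijOn (⇑x) Φ Φ :=
        (hΦfin.injOn_iff_bijOn_of_mapsTo hmaps).mp (x.injective.injOn)
      obtain ⟨γ, hγ, hγβ⟩ := hbij.surjOn hβ
      have hx' : x⁻¹ β = γ := by
        have := congrArg x.symm hγβ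
        simpa using this.symm
      rw [hx']; exact hγ
  -- W is finite
  haveI hWfin : Finite W := by
    let Φ' := hΦfin.toFinset
    let F : W → (Φ' → Φ') := fun w β => ⟨(w : V ≃ₗᵢ[ℝ] V) β.1, by
      rw [Set.Finite.mem_toFinset]
      exact hWΦ w w.2 β.1 (hΦfin.mem_toFinset.mp β.2)⟩
    have hF : Function.Injective F := by
      intro w1 w2 h
      have hagree : ∀ β ∈ Φ, (w1 : V ≃ₗᵢ[ℝ] V) β = (w2 : V ≃ₗᵢ[ℝ] V) β := by
        intro β hβ
        exact Subtype.ext_iff.mp (congrFun h ⟨β, hΦfin.mem_toFinset.mpr hβ⟩)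
      have h2 : ((w1 : V ≃ₗᵢ[ℝ] V) : V →ₗ[ℝ] V) = ((w2 : V ≃ₗᵢ[ℝ] V) : V →ₗ[ℝ] V) :=
        LinearMap.ext_on hΦspan hagree
      have h3 : ∀ x, (w1 : V ≃ₗᵢ[ℝ] V) x = (w2 : V ≃ₗᵢ[ℝ] V) x := fun x =>
        congrArg (fun f : V →ₗ[ℝ] V => f x) h2
      exact Subtype.ext (LinearIsometryEquiv.ext h3)
    exact Finite.of_injective F hF
  -- inner product invariance
  have hinv : ∀ w : V ≃ₗᵢ[ℝ] V, ∀ x y : V, ⟪w x, y⟫ = ⟪x, w.symm y⟫ := by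
    intro w x y
    conv_lhs => rw [← w.apply_symm_apply y]
    rw [w.inner_map_map]
  -- a strictly dominant vector `d`
  obtain ⟨d, hd⟩ := aux_exists_dual hΔind
  -- the closed chamber
  have hCsub : ∀ x ∈ closure C, ∀ i, 0 ≤ ⟪x, Δ i⟫ := by
    have hcl : IsClosed {x : V | ∀ i, 0 ≤ ⟪x, Δ i⟫} := by
      rw [Set.setOf_forall]
      exact isClosed_iInter fun i =>
        isClosed_le continuous_const (Continuous.inner continuous_id continuous_const)
    have hsub : C ⊆ {x : V | ∀ i, 0 ≤ ⟪x, Δ i⟫} := by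
      rw [hC]; intro x hx i
      have h1 := hx i
      rcases div_pos_iff.mp h1 with ⟨h2, _⟩ | ⟨_, h3⟩
      · linarith
      · linarith [hΔpos i]
    exact fun x hx => closure_minimal hsub hcl hx
  have hCmem : ∀ x : V, (∀ i, 0 ≤ ⟪x, Δ i⟫) → x ∈ closure C := by
    intro x hx
    have hseq : ∀ k : ℕ, x + (1 / (k + 1) : ℝ) • d ∈ C := by
      intro k; rw [hC]; intro i
      have h1 : (0 : ℝ) < 1 / ((k : ℝ) + 1) := by positivity
      have h2 : ⟪x + (1 / ((k : ℝ) + 1)) • d, Δ i⟫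
          = ⟪x, Δ i⟫ + (1 / ((k : ℝ) + 1)) * ⟪d, Δ i⟫ := by
        rw [inner_add_left, real_inner_smul_left]
      have h3 : 0 < ⟪x + (1 / ((k : ℝ) + 1)) • d, Δ i⟫ := by
        rw [h2, hd i]; linarith [hx i]
      exact div_pos (by linarith) (hΔpos i)
    have htend : Filter.Tendsto (fun k : ℕ => x + (1 / ((k : ℝ) + 1)) • d)
        Filter.atTop (nhds x) := by
      have h1 : Filter.Tendsto (fun k : ℕ => (1 / ((k : ℝ) + 1))) Filter.atTop (nhds 0) :=
        tendsto_one_div_add_atTop_nhds_zero_nat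
      have h2 := h1.smul_const d
      have h3 := tendsto_const_nhds (x := x) (f := Filter.atTop (α := ℕ)).add h2
      simpa using h3
    exact mem_closure_of_tendsto htend (Filter.Eventually.of_forall fun k => hseq k)
  -- P facts
  have hΦP : ∀ β ∈ Φ, β ∈ P := by
    rw [hP]; intro β hβ α hα; exact hΦcrys α hα β hβ
  have hPW : ∀ w ∈ W, ∀ x ∈ P, w x ∈ P := by
    intro w hw x hx
    rw [hP] at hx ⊢
    intro α hα
    have h1 : w.symm α ∈ Φ := hWΦ w⁻¹ (inv_mem hw) α hα
    obtain ⟨k, hk⟩ := hx _ h1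
    refine ⟨k, ?_⟩
    have h2 : ⟪α, α⟫ = ⟪w.symm α, w.symm α⟫ := by
      conv_lhs => rw [← w.apply_symm_apply α]
      exact w.inner_map_map _ _
    rw [hinv w x α, h2]; exact hk
  have hMP : ∀ μ ∈ M, μ ∈ P := by
    intro μ hμ
    rw [hM] at hμ
    refine AddSubgroup.closure_induction (p := fun v _ => v ∈ P) ?_ ?_ ?_ ?_ hμ
    · rintro v ⟨w, hw, rfl⟩; exact hPW w hw θ (hΦP θ hθΦ)
    · rw [hP]; intro α hα; exact ⟨0, by simp⟩
    · intro x y _ _ hx hy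
      rw [hP] at hx hy ⊢
      intro α hα
      obtain ⟨k1, h1⟩ := hx α hα
      obtain ⟨k2, h2⟩ := hy α hα
      refine ⟨k1 + k2, ?_⟩
      rw [inner_add_left]
      have : 2 * (⟪x, α⟫ + ⟪y, α⟫) / ⟪α, α⟫
          = 2 * ⟪x, α⟫ / ⟪α, α⟫ + 2 * ⟪y, α⟫ / ⟪α, α⟫ := by ring
      rw [this, h1, h2]; push_cast; ring
    · intro x _ hx
      rw [hP] at hx ⊢
      intro α hα
      obtain ⟨k, h1⟩ := hx α hα
      refine ⟨-k, ?_⟩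
      rw [inner_neg_left]
      have : 2 * (-⟪x, α⟫) / ⟪α, α⟫ = -(2 * ⟪x, α⟫ / ⟪α, α⟫) := by ring
      rw [this, h1]; push_cast; ring
  have hMW : ∀ w ∈ W, ∀ μ ∈ M, w μ ∈ M := by
    intro w hw μ hμ
    rw [hM] at hμ
    refine AddSubgroup.closure_induction (p := fun v _ => w v ∈ M) ?_ ?_ ?_ ?_ hμ
    · rintro v ⟨w', hw', rfl⟩
      rw [hM]
      exact AddSubgroup.subset_closure ⟨w * w', mul_mem hw hw', rfl⟩
    · show w 0 ∈ M
      rw [map_zero]; exact zero_mem M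
    · intro x y _ _ hx hy
      show w (x + y) ∈ M
      rw [map_add]; exact add_mem hx hy
    · intro x _ hx
      show w (-x) ∈ M
      rw [map_neg]; exact neg_mem hx
  have hPcomb : ∀ μ ∈ P, (ℓ : ℝ) • μ - lam ∈ P := by
    intro μ hμ
    have hlamP' := hlamP
    rw [hP] at hμ hlamP' ⊢
    intro α hα
    obtain ⟨k1, h1⟩ := hμ α hα
    obtain ⟨k2, h2⟩ := hlamP' α hα
    refine ⟨(ℓ : ℤ) * k1 - k2, ?_⟩
    rw [inner_sub_left, real_inner_smul_left]
    have : 2 * ((ℓ : ℝ) * ⟪μ, α⟫ - ⟪lam, α⟫) / ⟪α, α⟫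
        = (ℓ : ℝ) * (2 * ⟪μ, α⟫ / ⟪α, α⟫) - 2 * ⟪lam, α⟫ / ⟪α, α⟫ := by ring
    rw [this, h1, h2]; push_cast; ring
  -- key lemma: dominant representative maximizing the pairing with a dominant vector
  have hkey : ∀ lam' : V, (∀ i, 0 ≤ ⟪lam', Δ i⟫) → ∀ y : V,
      ∃ w ∈ W, (∀ i, 0 ≤ ⟪w y, Δ i⟫) ∧ ∀ w' ∈ W, ⟪w' y, lam'⟫ ≤ ⟪w y, lam'⟫ := by
    intro lam' hlam' y
    have hfin : ((fun g : V ≃ₗᵢ[ℝ] V => g y) '' (W : Set (V ≃ₗᵢ[ℝ] V))).Finite :=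
      (Set.toFinite (W : Set (V ≃ₗᵢ[ℝ] V))).image _
    set O : Finset V := hfin.toFinset with hO
    have hmemO : ∀ z, z ∈ O ↔ ∃ g ∈ W, g y = z := by
      intro z
      rw [hO, Set.Finite.mem_toFinset]
      constructor
      · rintro ⟨g, hg, rfl⟩; exact ⟨g, hg, rfl⟩
      · rintro ⟨g, hg, rfl⟩; exact ⟨g, hg, rfl⟩
    have hyO : y ∈ O := (hmemO y).mpr ⟨1, one_mem W, rfl⟩
    obtain ⟨z₀, hz₀O, hz₀max⟩ := O.exists_max_image (fun z => ⟪z, lam'⟫) ⟨y, hyO⟩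
    set O' : Finset V := O.filter (fun z => ⟪z₀, lam'⟫ ≤ ⟪z, lam'⟫) with hO'
    obtain ⟨z, hzO', hzmax⟩ := O'.exists_max_image (fun z => ⟪z, d⟫)
      ⟨z₀, Finset.mem_filter.mpr ⟨hz₀O, le_refl _⟩⟩
    obtain ⟨hzO, hzlam⟩ := Finset.mem_filter.mp hzO'
    have hzeq : ⟪z, lam'⟫ = ⟪z₀, lam'⟫ := le_antisymm (hz₀max z hzO) hzlam
    obtain ⟨w, hwW, hwz⟩ := (hmemO z).mp hzO
    refine ⟨w, hwW, ?_, ?_⟩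
    · rw [hwz]
      intro i
      by_contra hneg
      push_neg at hneg
      set s : V ≃ₗᵢ[ℝ] V := Submodule.reflection (ℝ ∙ (Δ i))ᗮ with hs
      have hsW : s ∈ W := by
        rw [hW]; exact Subgroup.subset_closure ⟨Δ i, hΔΦ i, rfl⟩
      have hszO : s z ∈ O := (hmemO _).mpr ⟨s * w, mul_mem hsW hwW, by rw [← hwz]; rfl⟩
      set c : ℝ := 2 * ⟪z, Δ i⟫ / ⟪Δ i, Δ i⟫ with hc
      have hcneg : c < 0 := div_neg_of_neg_of_pos (by linarith) (hΔpos i)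
      have hsz : s z = z - c • Δ i := aux_reflection_apply _ _
      have h1 : ⟪s z, lam'⟫ = ⟪z, lam'⟫ - c * ⟪Δ i, lam'⟫ := by
        rw [hsz, inner_sub_left, real_inner_smul_left]
      have h2 : ⟪s z, d⟫ = ⟪z, d⟫ - c * ⟪Δ i, d⟫ := by
        rw [hsz, inner_sub_left, real_inner_smul_left]
      have hΔlam : 0 ≤ ⟪Δ i, lam'⟫ := by rw [real_inner_comm]; exact hlam' i
      have hle : ⟪s z, lam'⟫ ≤ ⟪z₀, lam'⟫ := hz₀max _ hszO
      have hprod0 : c * ⟪Δ i, lam'⟫ = 0 := by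
        have hup : 0 ≤ c * ⟪Δ i, lam'⟫ := by rw [h1] at hle; linarith [hzeq]
        have hdown : c * ⟪Δ i, lam'⟫ ≤ 0 := mul_nonpos_of_nonpos_of_nonneg hcneg.le hΔlam
        linarith
      have hszO' : s z ∈ O' := Finset.mem_filter.mpr
        ⟨hszO, by rw [h1, hprod0, sub_zero, hzeq]⟩
      have hcontra : ⟪s z, d⟫ ≤ ⟪z, d⟫ := hzmax _ hszO'
      have hΔd : ⟪Δ i, d⟫ = 1 := by rw [real_inner_comm]; exact hd i
      rw [h2, hΔd, mul_one] at hcontra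
      linarith
    · intro w' hw'
      rw [hwz]
      exact le_trans (hz₀max _ ((hmemO _).mpr ⟨w', hw', rfl⟩)) hzeq.ge
  -- the set of candidate lattice points is finite
  set B : Set V := {μ | μ ∈ M ∧ ‖(ℓ : ℝ) • μ - lam‖ ≤ ‖lam‖} with hB
  have hBfin : B.Finite := by
    have hbound : ∀ μ ∈ B, ‖μ‖ ≤ 2 * ‖lam‖ := by
      intro μ hμ
      have h0 := hμ.2
      have h1 : ‖(ℓ : ℝ) • μ‖ - ‖lam‖ ≤ ‖(ℓ : ℝ) • μ - lam‖ := norm_sub_norm_le _ _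
      have h2 : ‖(ℓ : ℝ) • μ‖ = (ℓ : ℝ) * ‖μ‖ := by
        rw [norm_smul, Real.norm_natCast]
      have h3 : ‖μ‖ ≤ (ℓ : ℝ) * ‖μ‖ :=
        le_mul_of_one_le_left (norm_nonneg μ) (by exact_mod_cast hℓ)
      linarith
    set g : V → (↥hΦfin.toFinset → ℝ) :=
      fun μ => fun α => 2 * ⟪μ, (α : V)⟫ / ⟪(α : V), (α : V)⟫ with hg
    have ginj : Set.InjOn g B := by
      intro x _ y _ hxy
      have horth : ∀ α ∈ Φ, ⟪α, x - y⟫ = 0 := by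
        intro α hα
        have h1 := congrFun hxy ⟨α, hΦfin.mem_toFinset.mpr hα⟩
        simp only [hg] at h1
        have hαpos := hroot_pos α hα
        have hne : ⟪α, α⟫ ≠ (0 : ℝ) := ne_of_gt hαpos
        have h1' : 2 * ⟪x, α⟫ / ⟪α, α⟫ = 2 * ⟪y, α⟫ / ⟪α, α⟫ := h1
        have h2 : ⟪x, α⟫ = ⟪y, α⟫ := by
          field_simp [hne] at h1'
          linarith
        have h3 : ⟪α, x - y⟫ = ⟪x, α⟫ - ⟪y, α⟫ := by
          rw [inner_sub_right, real_inner_comm α x, real_inner_comm α y]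
        rw [h3, h2, sub_self]
      have hmem : x - y ∈ (Submodule.span ℝ Φ)ᗮ := by
        rw [Submodule.mem_orthogonal]
        intro u hu
        induction hu using Submodule.span_induction with
        | mem v hv => exact horth v hv
        | zero => simp
        | add a b _ _ ha hb => rw [inner_add_left, ha, hb]; ring
        | smul r a _ ha => rw [real_inner_smul_left, ha]; ring
      rw [hΦspan, Submodule.top_orthogonal_eq_bot] at hmem
      have : x - y = 0 := by simpa using hmem
      exact sub_eq_zero.mp this
    have himg : (g '' B).Finite := by
      have hfin2 : (Set.pi Set.univ (fun α : ↥hΦfin.toFinset =>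
          (fun k : ℤ => (k : ℝ)) ''
            (Set.Icc (-(⌈4 * ‖lam‖ * ‖(α : V)‖ / ⟪(α : V), (α : V)⟫⌉))
              ⌈4 * ‖lam‖ * ‖(α : V)‖ / ⟪(α : V), (α : V)⟫⌉ : Set ℤ))).Finite :=
        Set.Finite.pi fun α => (Set.finite_Icc _ _).image _
      refine hfin2.subset ?_
      rintro _ ⟨μ, hμB, rfl⟩
      rw [Set.mem_pi]
      intro α _
      have hμP := hMP μ hμB.1
      rw [hP] at hμP
      have hαΦ : (α : V) ∈ Φ := hΦfin.mem_toFinset.mp α.2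
      obtain ⟨k, hk⟩ := hμP (α : V) hαΦ
      have hαpos := hroot_pos _ hαΦ
      have hip : |⟪μ, (α : V)⟫| ≤ ‖μ‖ * ‖(α : V)‖ := abs_real_inner_le_norm μ (α : V)
      have hμn : ‖μ‖ ≤ 2 * ‖lam‖ := hbound μ hμB
      have habs : |(k : ℝ)| ≤ 4 * ‖lam‖ * ‖(α : V)‖ / ⟪(α : V), (α : V)⟫ := by
        rw [← hk, abs_div, abs_of_pos hαpos]
        rw [div_le_div_iff_of_pos_right hαpos]
        rw [abs_mul, abs_two]
        nlinarith [norm_nonneg (α : V), norm_nonneg μ, abs_nonneg ⟪μ, (α : V)⟫]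
      have hceil : |(k : ℝ)| ≤ ((⌈4 * ‖lam‖ * ‖(α : V)‖ / ⟪(α : V), (α : V)⟫⌉ : ℤ) : ℝ) :=
        habs.trans (Int.le_ceil _)
      have hkZ : |k| ≤ ⌈4 * ‖lam‖ * ‖(α : V)‖ / ⟪(α : V), (α : V)⟫⌉ := by
        exact_mod_cast hceil
      obtain ⟨hk1, hk2⟩ := abs_le.mp hkZ
      exact ⟨k, Set.mem_Icc.mpr ⟨hk1, hk2⟩, hk.symm⟩
    exact Set.Finite.of_finite_image himg ginj
  -- a global minimizer over `M` of the distance to `lam` after scaling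
  have h0B : (0 : V) ∈ B := ⟨zero_mem M, by simp⟩
  obtain ⟨μ₀, hμ₀B, hμ₀min⟩ := hBfin.toFinset.exists_min_image
    (fun μ => ‖(ℓ : ℝ) • μ - lam‖) ⟨0, hBfin.mem_toFinset.mpr h0B⟩
  rw [hBfin.mem_toFinset] at hμ₀B
  have hglob : ∀ μ' ∈ M, ‖(ℓ : ℝ) • μ₀ - lam‖ ≤ ‖(ℓ : ℝ) • μ' - lam‖ := by
    intro μ' hμ'
    by_cases hcase : ‖(ℓ : ℝ) • μ' - lam‖ ≤ ‖lam‖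
    · exact hμ₀min μ' (hBfin.mem_toFinset.mpr ⟨hμ', hcase⟩)
    · push_neg at hcase
      exact le_trans hμ₀B.2 hcase.le
  -- replace the minimizer by a dominant representative
  have hlamdom : ∀ i, 0 ≤ ⟪lam, Δ i⟫ := hCsub lam hlamC
  obtain ⟨u, huW, hudom, humax⟩ := hkey lam hlamdom μ₀
  set μ : V := u μ₀ with hμdef
  have hμM : μ ∈ M := hMW u huW μ₀ hμ₀B.1
  have hμC : μ ∈ closure C := hCmem μ hudom
  have hμinner : ⟪μ₀, lam⟫ ≤ ⟪μ, lam⟫ := by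
    have h1 := humax 1 (one_mem W)
    simpa using h1
  have hμnorm : ‖μ‖ = ‖μ₀‖ := u.norm_map μ₀
  have hμglob : ∀ μ' ∈ M, ‖(ℓ : ℝ) • μ - lam‖ ≤ ‖(ℓ : ℝ) • μ' - lam‖ := by
    intro μ' hμ'
    refine le_trans ?_ (hglob μ' hμ')
    have e1 : ‖(ℓ : ℝ) • μ - lam‖ ^ 2 ≤ ‖(ℓ : ℝ) • μ₀ - lam‖ ^ 2 := by
      rw [norm_sub_sq_real, norm_sub_sq_real, norm_smul, norm_smul,
        real_inner_smul_left, real_inner_smul_left, Real.norm_natCast, hμnorm]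
      nlinarith [hμinner, hℓR]
    nlinarith [norm_nonneg ((ℓ : ℝ) • μ - lam), norm_nonneg ((ℓ : ℝ) • μ₀ - lam), e1]
  -- the dominant representative of `ℓ • μ - lam`
  obtain ⟨w, hwW, hwdom, -⟩ := hkey lam hlamdom ((ℓ : ℝ) • μ - lam)
  refine ⟨μ, hμM, hμC, w, hwW, ⟨hPW w hwW _ (hPcomb μ (hMP μ hμM)), hCmem _ hwdom⟩, ?_⟩
  -- the level bound, by minimality
  by_contra hcon
  push_neg at hcon
  set ν : V := w ((ℓ : ℝ) • μ - lam) with hν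
  have hbig : (ℓ : ℝ) * ⟪θ, θ⟫ < 2 * ⟪ν, θ⟫ := by
    rw [lt_div_iff₀ hθpos] at hcon
    linarith
  set μ' : V := μ - w.symm θ with hμ'
  have hμ'M : μ' ∈ M := by
    refine sub_mem hμM ?_
    rw [hM]
    exact AddSubgroup.subset_closure ⟨w⁻¹, inv_mem hwW, rfl⟩
  have hw' : w ((ℓ : ℝ) • μ' - lam) = ν - (ℓ : ℝ) • θ := by
    rw [hμ']
    have h1 : (ℓ : ℝ) • (μ - w.symm θ) - lam
        = ((ℓ : ℝ) • μ - lam) - (ℓ : ℝ) • w.symm θ := by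
      rw [smul_sub]; abel
    rw [h1, map_sub, map_smul, w.apply_symm_apply, hν]
  have hnormeq : ‖(ℓ : ℝ) • μ' - lam‖ = ‖ν - (ℓ : ℝ) • θ‖ := by
    rw [← hw']
    exact (w.norm_map _).symm
  have hν2 : ‖ν‖ = ‖(ℓ : ℝ) • μ - lam‖ := w.norm_map _
  have hsq : ‖ν - (ℓ : ℝ) • θ‖ ^ 2
      = ‖ν‖ ^ 2 - 2 * ((ℓ : ℝ) * ⟪ν, θ⟫) + ((ℓ : ℝ)) ^ 2 * ⟪θ, θ⟫ := by
    rw [norm_sub_sq_real, norm_smul, Real.norm_natCast, real_inner_smul_right,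
      mul_pow, real_inner_self_eq_norm_sq]
  have hlt : ‖ν - (ℓ : ℝ) • θ‖ ^ 2 < ‖ν‖ ^ 2 := by
    rw [hsq]
    nlinarith [hbig, hℓR]
  have hge := hμglob μ' hμ'M
  rw [hnormeq, ← hν2] at hge
  nlinarith [norm_nonneg (ν - (ℓ : ℝ) • θ), norm_nonneg ν, hge, hlt]
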